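/- Let R = [[0,1],[-1,0]] and let A_z(θ) be the UAMO transfer cocycle matrix A_z(θ) = (λ₂cos(2πθ) - iλ₂')⁻¹ [[λ₁⁻¹z⁻¹ + 2λ₁'λ₁⁻¹λ₂ sin(2πθ) + zλ₁'²λ₁⁻¹, -λ₂sin(2πθ) - λ₁'z], [-λ₂sin(2πθ) - λ₁'z, λ₁z]]. Then R⁻¹ A_z(θ)⁻¹ R = -A_z(1/2 - θ), whenever λ₂cos(2πθ) - iλ₂' ≠ 0, λ₁ ∈ (0,1], and z ≠ 0. -/

import Mathlib

open Matrix

set_option maxHeartbeats 1000000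

/-- The UAMO transfer matrix cocycle. -/
noncomputable def uamoA (lam1 lam2 : ℝ) (z : ℂ) (θ : ℝ) : Matrix (Fin 2) (Fin 2) ℂ :=
  ((lam2 * Real.cos (2 * Real.pi * θ) : ℂ) - Complex.I * (Real.sqrt (1 - lam2 ^ 2) : ℂ))⁻¹ •
    !![(lam1 : ℂ)⁻¹ * z⁻¹
          + 2 * (Real.sqrt (1 - lam1 ^ 2) : ℂ) * (lam1 : ℂ)⁻¹ * (lam2 : ℂ)
              * (Real.sin (2 * Real.pi * θ) : ℂ)
          + z * (Real.sqrt (1 - lam1 ^ 2) : ℂ) ^ 2 * (lam1 : ℂ)⁻¹,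
        -((lam2 : ℂ) * (Real.sin (2 * Real.pi * θ) : ℂ)) - (Real.sqrt (1 - lam1 ^ 2) : ℂ) * z;
        -((lam2 : ℂ) * (Real.sin (2 * Real.pi * θ) : ℂ)) - (Real.sqrt (1 - lam1 ^ 2) : ℂ) * z,
        (lam1 : ℂ) * z]

theorem uamo_reflection (lam1 lam2 : ℝ) (h1 : lam1 ∈ Set.Ioc (0:ℝ) 1)
    (h2 : lam2 ∈ Set.Icc (0:ℝ) 1) (z : ℂ) (hz : z ≠ 0) (θ : ℝ)
    (hden : (lam2 * Real.cos (2 * Real.pi * θ) : ℂ)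
        - Complex.I * (Real.sqrt (1 - lam2 ^ 2) : ℂ) ≠ 0) :
    (!![0, 1; -1, 0] : Matrix (Fin 2) (Fin 2) ℂ)⁻¹ * (uamoA lam1 lam2 z θ)⁻¹
        * (!![0, 1; -1, 0] : Matrix (Fin 2) (Fin 2) ℂ)
      = -(uamoA lam1 lam2 z (1 / 2 - θ)) := by
  have hcos : Real.cos (2 * Real.pi * (1/2 - θ)) = -Real.cos (2 * Real.pi * θ) := by
    rw [show 2 * Real.pi * (1/2 - θ) = Real.pi - 2 * Real.pi * θ by ring, Real.cos_pi_sub]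
  have hsin : Real.sin (2 * Real.pi * (1/2 - θ)) = Real.sin (2 * Real.pi * θ) := by
    rw [show 2 * Real.pi * (1/2 - θ) = Real.pi - 2 * Real.pi * θ by ring, Real.sin_pi_sub]
  have hl1 : (lam1 : ℂ) ≠ 0 := by exact_mod_cast ne_of_gt h1.1
  have hv : ((Real.sqrt (1 - lam2 ^ 2) : ℝ) : ℂ) ^ 2 = 1 - (lam2:ℂ) ^ 2 := by
    rw [← Complex.ofReal_pow, Real.sq_sqrt (by nlinarith [h2.2, h2.1] : (0:ℝ) ≤ 1 - lam2 ^ 2)]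
    push_cast; ring
  have hscC : Complex.sin (2 * (Real.pi:ℂ) * (θ:ℂ)) ^ 2
      + Complex.cos (2 * (Real.pi:ℂ) * (θ:ℂ)) ^ 2 = 1 := Complex.sin_sq_add_cos_sq _
  have hdenC : (lam2:ℂ) * Complex.cos (2 * (Real.pi:ℂ) * (θ:ℂ))
      - Complex.I * (Real.sqrt (1 - lam2 ^ 2) : ℂ) ≠ 0 := by
    intro h
    apply hden
    rw [Complex.ofReal_cos]
    push_cast
    convert h using 3
  have hconj : (starRingEnd ℂ) (Complex.cos (2 * (Real.pi:ℂ) * (θ:ℂ)))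
      = Complex.cos (2 * (Real.pi:ℂ) * (θ:ℂ)) := by
    rw [show (2 * (Real.pi:ℂ) * (θ:ℂ)) = ((2 * Real.pi * θ : ℝ) : ℂ) by push_cast; ring,
      ← Complex.ofReal_cos, Complex.conj_ofReal]
  have hD'C : -((lam2:ℂ) * Complex.cos (2 * (Real.pi:ℂ) * (θ:ℂ)))
      - Complex.I * (Real.sqrt (1 - lam2 ^ 2) : ℂ) ≠ 0 := by
    have e : -((lam2:ℂ) * Complex.cos (2 * (Real.pi:ℂ) * (θ:ℂ)))
        - Complex.I * (Real.sqrt (1 - lam2 ^ 2) : ℂ)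
        = -((starRingEnd ℂ) ((lam2:ℂ) * Complex.cos (2 * (Real.pi:ℂ) * (θ:ℂ))
            - Complex.I * (Real.sqrt (1 - lam2 ^ 2) : ℂ))) := by
      rw [map_sub, _root_.map_mul, _root_.map_mul, hconj, Complex.conj_I,
        Complex.conj_ofReal, Complex.conj_ofReal]
      ring
    rw [e, neg_ne_zero, starRingEnd_apply]
    exact star_ne_zero.mpr hdenC
  have hRinv : (!![0, 1; -1, 0] : Matrix (Fin 2) (Fin 2) ℂ)⁻¹ = !![0, -1; 1, 0] := by
    apply Matrix.inv_eq_right_inv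
    rw [Matrix.mul_fin_two]
    norm_num
    exact Matrix.one_fin_two.symm
  have key : uamoA lam1 lam2 z θ *
      ((!![0, 1; -1, 0] : Matrix (Fin 2) (Fin 2) ℂ) * (-(uamoA lam1 lam2 z (1/2 - θ))) *
        !![0, -1; 1, 0]) = 1 := by
    rw [uamoA, uamoA, hcos, hsin]
    simp only [Matrix.mul_neg, Matrix.neg_mul, Matrix.smul_mul, Matrix.mul_smul,
      Matrix.mul_fin_two, smul_smul]
    rw [show (1 : Matrix (Fin 2) (Fin 2) ℂ) = !![1,0;0,1] from Matrix.one_fin_two]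
    ext i j
    fin_cases i <;> fin_cases j <;>
      simp only [Matrix.smul_apply, Matrix.neg_apply, Matrix.cons_val', Matrix.cons_val_zero,
        Matrix.cons_val_one, Matrix.head_cons, Matrix.head_fin_const, Matrix.empty_val',
        Matrix.cons_val_fin_one, smul_eq_mul, Fin.zero_eta, Fin.mk_one, Matrix.of_apply] <;> push_cast <;>
      field_simp
    · linear_combination ((lam1:ℂ)^2 * z^2 * (lam2:ℂ)^2) * hscC
        + (-((lam1:ℂ)^2 * z^2 * ((Real.sqrt (1 - lam2 ^ 2) : ℝ) : ℂ)^2)) * Complex.I_sq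
        + ((lam1:ℂ)^2 * z^2) * hv
    · ring
    · ring
    · linear_combination ((lam1:ℂ)^1 * z * (lam2:ℂ)^2) * hscC
        + (-((lam1:ℂ)^1 * z * ((Real.sqrt (1 - lam2 ^ 2) : ℝ) : ℂ)^2)) * Complex.I_sq
        + ((lam1:ℂ)^1 * z) * hv
  have hAinv : (uamoA lam1 lam2 z θ)⁻¹ =
      (!![0, 1; -1, 0] : Matrix (Fin 2) (Fin 2) ℂ) * (-(uamoA lam1 lam2 z (1/2 - θ))) *
        !![0, -1; 1, 0] := Matrix.inv_eq_right_inv key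
  rw [hRinv, hAinv]
  have h21 : (!![0, -1; 1, 0] : Matrix (Fin 2) (Fin 2) ℂ) * !![0, 1; -1, 0] = 1 := by
    rw [Matrix.mul_fin_two]
    norm_num
    exact Matrix.one_fin_two.symm
  have assoc : (!![0, -1; 1, 0] : Matrix (Fin 2) (Fin 2) ℂ) *
      (!![0, 1; -1, 0] * (-(uamoA lam1 lam2 z (1/2 - θ))) * !![0, -1; 1, 0]) * !![0, 1; -1, 0]
      = (!![0, -1; 1, 0] * !![0, 1; -1, 0]) * (-(uamoA lam1 lam2 z (1/2 - θ))) *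
        (!![0, -1; 1, 0] * !![0, 1; -1, 0]) := by
    simp only [Matrix.mul_assoc]
  rw [assoc, h21, Matrix.one_mul, Matrix.mul_one]
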